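/- arXiv:2206.14627 — 5 statements merged into one kernel-verified Lean document; each statement's English description precedes it below -/
import Mathlib

section
/- Let d ≥ 1 and g(r) := Vol(B(0, (√d/2)·r) ∩ [-1/2,1/2]^d). Then for every ε > 0 sufficiently small, g(1) - g(1-ε) ≥ ε^d. -/
open MeasureTheory Filter Topology

/-- With `g(r) = Vol(B(0,(√d/2)r) ∩ [-1/2,1/2]^d)`, for all sufficiently
small `ε > 0` one has `g(1) - g(1-ε) ≥ ε^d`. -/
theorem stmt_4 (d : ℕ) (hd : 1 ≤ d)
    (g : ℝ → ℝ)
    (hg : ∀ r : ℝ, g r =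
      (volume {x : Fin d → ℝ | (∀ i, |x i| ≤ 1/2) ∧
        Real.sqrt (∑ i, x i ^ 2) < Real.sqrt d / 2 * r}).toReal) :
    ∃ ε₀ > (0:ℝ), ∀ ε : ℝ, 0 < ε → ε < ε₀ → g 1 - g (1 - ε) ≥ ε ^ d := by
  haveI : NeZero d := ⟨by omega⟩
  have hs4 : Real.sqrt ((d : ℝ)/4) = Real.sqrt d / 2 := by
    rw [Real.sqrt_div (by positivity) 4,
      show (4:ℝ) = 2^2 by norm_num, Real.sqrt_sq (by norm_num : (0:ℝ) ≤ 2)]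
  refine ⟨1, one_pos, fun ε hε hε1 => ?_⟩
  have hε2 : (0:ℝ) < 1/2 - ε/2 := by linarith
  set s : Set ℝ := Set.Ioc (-(1/2)) (-(1/2 - ε/2)) ∪ Set.Ico (1/2 - ε/2) (1/2) with hs
  have hdisj : Disjoint (Set.Ioc (-(1/2):ℝ) (-(1/2 - ε/2))) (Set.Ico (1/2 - ε/2) (1/2)) := by
    rw [Set.disjoint_left]
    rintro t ⟨_, ht2⟩ ⟨ht3, _⟩
    linarith
  have hsvol : volume s = ENNReal.ofReal ε := by
    rw [hs, measure_union hdisj measurableSet_Ico, Real.volume_Ioc, Real.volume_Ico,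
      show -(1/2 - ε/2) - -(1/2) = ε/2 by ring, show 1/2 - (1/2 - ε/2) = ε/2 by ring,
      ← ENNReal.ofReal_add (by linarith) (by linarith)]
    norm_num
  have hsmem : ∀ t ∈ s, 1/2 - ε/2 ≤ |t| ∧ |t| < 1/2 := by
    rintro t (⟨h1, h2⟩ | ⟨h1, h2⟩)
    · have ht : t < 0 := by linarith
      rw [abs_of_neg ht]; constructor <;> linarith
    · have ht : 0 ≤ t := by linarith
      rw [abs_of_nonneg ht]; exact ⟨h1, h2⟩
  set K : Set (Fin d → ℝ) := Set.univ.pi (fun _ => s) with hK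
  have hKvol : volume K = ENNReal.ofReal ε ^ d := by
    rw [hK, volume_pi_pi]
    simp [hsvol]
  have hKsum : ∀ x ∈ K, (d:ℝ)/4 * (1-ε)^2 ≤ ∑ i, x i ^ 2 ∧ ∑ i, x i ^ 2 < (d:ℝ)/4 := by
    intro x hx
    have h := fun i => hsmem (x i) (hx i (Set.mem_univ i))
    constructor
    · have hle : ∀ i ∈ Finset.univ, ((1:ℝ)/2 - ε/2)^2 ≤ x i ^ 2 := by
        intro i _
        calc ((1:ℝ)/2-ε/2)^2 ≤ |x i|^2 := pow_le_pow_left₀ hε2.le (h i).1 2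
          _ = x i ^2 := sq_abs _
      calc (d:ℝ)/4*(1-ε)^2 = ∑ _i : Fin d, ((1:ℝ)/2-ε/2)^2 := by
            simp [Finset.sum_const]; ring
        _ ≤ ∑ i, x i ^2 := Finset.sum_le_sum hle
    · have hlt : ∀ i ∈ Finset.univ, x i ^ 2 < ((1:ℝ)/2)^2 := by
        intro i _
        calc x i ^2 = |x i|^2 := (sq_abs _).symm
          _ < ((1:ℝ)/2)^2 := pow_lt_pow_left₀ (h i).2 (abs_nonneg _) two_ne_zero
      calc ∑ i, x i ^2 < ∑ _i : Fin d, ((1:ℝ)/2)^2 :=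
            Finset.sum_lt_sum_of_nonempty Finset.univ_nonempty hlt
        _ = (d:ℝ)/4 := by simp [Finset.sum_const]; ring
  set A := {x : Fin d → ℝ | (∀ i, |x i| ≤ 1/2) ∧
      Real.sqrt (∑ i, x i ^ 2) < Real.sqrt d / 2 * 1} with hA
  set B := {x : Fin d → ℝ | (∀ i, |x i| ≤ 1/2) ∧
      Real.sqrt (∑ i, x i ^ 2) < Real.sqrt d / 2 * (1 - ε)} with hB
  have hKA : K ⊆ A := by
    intro x hx
    obtain ⟨h1, h2⟩ := hKsum x hx
    refine ⟨fun i => (hsmem (x i) (hx i trivial)).2.le, ?_⟩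
    rw [mul_one]
    calc Real.sqrt (∑ i, x i ^2) < Real.sqrt ((d:ℝ)/4) := Real.sqrt_lt_sqrt (by positivity) h2
      _ = Real.sqrt d / 2 := hs4
  have hKB : Disjoint K B := by
    rw [Set.disjoint_left]
    intro x hx hxB
    obtain ⟨h1, _⟩ := hKsum x hx
    have hlb : Real.sqrt d / 2 * (1-ε) ≤ Real.sqrt (∑ i, x i ^ 2) := by
      have h := Real.sqrt_le_sqrt h1
      rwa [Real.sqrt_mul (by positivity) ((1-ε)^2), Real.sqrt_sq (by linarith), hs4] at h
    exact absurd hxB.2 (not_lt.mpr hlb)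
  have hBA : B ⊆ A := by
    intro x hx
    refine ⟨hx.1, lt_of_lt_of_le hx.2 ?_⟩
    have hsd : 0 ≤ Real.sqrt d / 2 := by positivity
    exact mul_le_mul_of_nonneg_left (by linarith) hsd
  have hBmeas : MeasurableSet B := by
    rw [hB, Set.setOf_and]
    apply MeasurableSet.inter
    · rw [Set.setOf_forall]
      exact MeasurableSet.iInter fun i =>
        measurableSet_le (measurable_pi_apply i).abs measurable_const
    · exact measurableSet_lt
        (Real.continuous_sqrt.measurable.comp
          (Finset.measurable_sum _ fun i _ => (measurable_pi_apply i).pow_const 2))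
        measurable_const
  have hAcube : A ⊆ Set.univ.pi fun _ : Fin d => Set.Icc (-(1/2):ℝ) (1/2) := by
    intro x hx i _
    have := hx.1 i
    rw [abs_le] at this
    exact ⟨this.1, this.2⟩
  have hcube : volume (Set.univ.pi fun _ : Fin d => Set.Icc (-(1/2):ℝ) (1/2)) = 1 := by
    rw [volume_pi_pi]
    norm_num
  have hAfin : volume A ≠ ⊤ :=
    ne_top_of_le_ne_top (by rw [hcube]; exact ENNReal.one_ne_top) (measure_mono hAcube)
  have hBfin : volume B ≠ ⊤ := ne_top_of_le_ne_top hAfin (measure_mono hBA)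
  have hKfin : volume K ≠ ⊤ := by
    rw [hKvol]; exact ENNReal.pow_ne_top ENNReal.ofReal_ne_top
  have hunion : volume K + volume B ≤ volume A := by
    rw [← measure_union hKB hBmeas]
    exact measure_mono (Set.union_subset hKA hBA)
  have hmono := ENNReal.toReal_mono hAfin hunion
  rw [ENNReal.toReal_add hKfin hBfin] at hmono
  have hKr : (volume K).toReal = ε ^ d := by
    rw [hKvol, ENNReal.toReal_pow, ENNReal.toReal_ofReal hε.le]
  rw [hKr] at hmono
  rw [hg 1, hg (1-ε), ← hA, ← hB]
  linarith
end

section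
/- Let d ≥ 1, r > 0 and N ≥ 1. The number of unit hypercubes centered at points of ℤ^d ∩ [-N,N]^d that intersect the boundary sphere ∂B(0,r) (with r ≤ √d·N) is at most c_d·N^{d-1} for a constant c_d depending only on d. -/
open MeasureTheory Filter Topology

open Finset in
lemma aux_bound (d : ℕ) (hd : 1 ≤ d) (r : ℝ) (hr : 0 < r) (i : Fin d)
    (x x' : Fin d → ℝ) (z z' : Fin d → ℤ)
    (hx : Real.sqrt (∑ j, x j ^ 2) = r) (hx' : Real.sqrt (∑ j, x' j ^ 2) = r)
    (hzx : ∀ j, |x j - (z j : ℝ)| ≤ 1/2) (hzx' : ∀ j, |x' j - (z' j : ℝ)| ≤ 1/2)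
    (hmax : ∀ j, x j ^ 2 ≤ x i ^ 2) (hmax' : ∀ j, x' j ^ 2 ≤ x' i ^ 2)
    (hsign : 0 ≤ x i ↔ 0 ≤ x' i)
    (hoff : ∀ j, j ≠ i → z j = z' j) :
    |(z i : ℝ) - (z' i : ℝ)| ≤ (d : ℝ) ^ 2 + 1 := by
  have hdR : (1 : ℝ) ≤ d := by exact_mod_cast hd
  have h0 : (0 : ℝ) ≤ ∑ j, x j ^ 2 := Finset.sum_nonneg fun j _ => sq_nonneg _
  have h0' : (0 : ℝ) ≤ ∑ j, x' j ^ 2 := Finset.sum_nonneg fun j _ => sq_nonneg _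
  have hs : ∑ j, x j ^ 2 = r ^ 2 := by
    have := Real.sq_sqrt h0; rw [hx] at this; linarith
  have hs' : ∑ j, x' j ^ 2 = r ^ 2 := by
    have := Real.sq_sqrt h0'; rw [hx'] at this; linarith
  have hle : ∀ j, |x j| ≤ r := by
    intro j
    have h0 : x j ^ 2 ≤ ∑ k, x k ^ 2 :=
      Finset.single_le_sum (f := fun k => x k ^ 2) (fun k _ => sq_nonneg _) (Finset.mem_univ j)
    have h1 : x j ^ 2 ≤ r ^ 2 := by linarith
    nlinarith [sq_abs (x j), abs_nonneg (x j)]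
  have hle' : ∀ j, |x' j| ≤ r := by
    intro j
    have h0 : x' j ^ 2 ≤ ∑ k, x' k ^ 2 :=
      Finset.single_le_sum (f := fun k => x' k ^ 2) (fun k _ => sq_nonneg _) (Finset.mem_univ j)
    have h1 : x' j ^ 2 ≤ r ^ 2 := by linarith
    nlinarith [sq_abs (x' j), abs_nonneg (x' j)]
  -- lower bound on |x i|, |x' i|
  have hri : r ≤ d * |x i| := by
    have h1 : r ^ 2 ≤ d * x i ^ 2 := by
      calc r ^ 2 = ∑ j, x j ^ 2 := hs.symm
        _ ≤ ∑ _j : Fin d, x i ^ 2 := Finset.sum_le_sum fun j _ => hmax j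
        _ = d * x i ^ 2 := by simp [Finset.sum_const, Finset.card_univ, nsmul_eq_mul]
    have hnn : (0:ℝ) ≤ (d:ℝ) * (x i) ^ 2 * ((d:ℝ) - 1) :=
      mul_nonneg (mul_nonneg (Nat.cast_nonneg d) (sq_nonneg _)) (by linarith)
    have h2 : r ^ 2 ≤ ((d:ℝ) * |x i|) ^ 2 := by rw [mul_pow, sq_abs]; nlinarith
    nlinarith [h2, mul_nonneg (Nat.cast_nonneg (α := ℝ) d) (abs_nonneg (x i)), hr]
  have hri' : r ≤ d * |x' i| := by
    have h1 : r ^ 2 ≤ d * x' i ^ 2 := by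
      calc r ^ 2 = ∑ j, x' j ^ 2 := hs'.symm
        _ ≤ ∑ _j : Fin d, x' i ^ 2 := Finset.sum_le_sum fun j _ => hmax' j
        _ = d * x' i ^ 2 := by simp [Finset.sum_const, Finset.card_univ, nsmul_eq_mul]
    have hnn : (0:ℝ) ≤ (d:ℝ) * (x' i) ^ 2 * ((d:ℝ) - 1) :=
      mul_nonneg (mul_nonneg (Nat.cast_nonneg d) (sq_nonneg _)) (by linarith)
    have h2 : r ^ 2 ≤ ((d:ℝ) * |x' i|) ^ 2 := by rw [mul_pow, sq_abs]; nlinarith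
    nlinarith [h2, mul_nonneg (Nat.cast_nonneg (α := ℝ) d) (abs_nonneg (x' i)), hr]
  -- bound on |x i ^2 - x' i ^2|
  have hdiff : ∀ j, j ≠ i → |x j - x' j| ≤ 1 := by
    intro j hj
    have h1 := hzx j
    have h2 := hzx' j
    have h3 := hoff j hj
    have : |x j - x' j| ≤ |x j - (z j : ℝ)| + |(z j : ℝ) - x' j| := abs_sub_le _ _ _
    have h4 : |(z j : ℝ) - x' j| = |x' j - (z' j : ℝ)| := by rw [h3, abs_sub_comm]
    linarith [this, h4 ▸ this]
  have hsq : |x i ^ 2 - x' i ^ 2| ≤ 2 * d * r := by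
    have e1 : ∑ j, x j ^ 2 = x i ^ 2 + ∑ j ∈ univ.erase i, x j ^ 2 :=
      (Finset.add_sum_erase _ _ (mem_univ i)).symm
    have e1' : ∑ j, x' j ^ 2 = x' i ^ 2 + ∑ j ∈ univ.erase i, x' j ^ 2 :=
      (Finset.add_sum_erase _ _ (mem_univ i)).symm
    have h1 : x i ^ 2 - x' i ^ 2 = ∑ j ∈ univ.erase i, (x' j ^ 2 - x j ^ 2) := by
      rw [Finset.sum_sub_distrib]
      have := hs; have := hs'; linarith [e1, e1']
    rw [h1]
    calc |∑ j ∈ univ.erase i, (x' j ^ 2 - x j ^ 2)|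
        ≤ ∑ j ∈ univ.erase i, |x' j ^ 2 - x j ^ 2| := Finset.abs_sum_le_sum_abs _ _
      _ ≤ ∑ _j ∈ univ.erase i, 2 * r := by
          refine Finset.sum_le_sum fun j hj => ?_
          have hjne : j ≠ i := Finset.ne_of_mem_erase hj
          have h2 := hdiff j hjne
          have h3 := hle j
          have h4 := hle' j
          have e2 : x' j ^ 2 - x j ^ 2 = (x' j - x j) * (x' j + x j) := by ring
          rw [e2, abs_mul]
          have h5 : |x' j - x j| ≤ 1 := by rw [abs_sub_comm]; exact h2
          have h6 : |x' j + x j| ≤ 2 * r := by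
            calc |x' j + x j| ≤ |x' j| + |x j| := abs_add_le _ _
              _ ≤ 2 * r := by linarith
          calc |x' j - x j| * |x' j + x j| ≤ 1 * (2 * r) := by
                apply mul_le_mul h5 h6 (abs_nonneg _) (by norm_num)
            _ = 2 * r := by ring
      _ = (univ.erase i).card * (2 * r) := by rw [Finset.sum_const, nsmul_eq_mul]
      _ ≤ 2 * d * r := by
          have : (univ.erase i).card = d - 1 := by
            rw [Finset.card_erase_of_mem (mem_univ i), Finset.card_univ, Fintype.card_fin]
          rw [this]
          have : ((d - 1 : ℕ) : ℝ) ≤ d := by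
            have := Nat.sub_le d 1; exact_mod_cast Nat.cast_le.mpr this
          nlinarith
  -- same sign
  have hsame : |x i - x' i| = abs (|x i| - |x' i|) := by
    rcases em (0 ≤ x i) with h | h
    · have h' := hsign.mp h
      rw [abs_of_nonneg h, abs_of_nonneg h']
    · have h' : ¬ (0 ≤ x' i) := fun hh => h (hsign.mpr hh)
      push_neg at h h'
      rw [abs_of_neg h, abs_of_neg h',
        show -x i - -x' i = -(x i - x' i) by ring, abs_neg]
  have habs : abs (|x i| - |x' i|) * (|x i| + |x' i|) = |x i ^ 2 - x' i ^ 2| := by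
    have h1 : 0 ≤ |x i| + |x' i| := by positivity
    rw [← abs_of_nonneg h1, ← abs_mul]
    congr 1
    rw [← sq_abs (x i), ← sq_abs (x' i)]; ring
  -- conclude |x i - x' i| ≤ d ^ 2
  have hkey : |x i - x' i| ≤ (d : ℝ) ^ 2 := by
    have hA : 0 ≤ |x i - x' i| := abs_nonneg _
    have h1 : |x i - x' i| * (|x i| + |x' i|) ≤ 2 * d * r := by
      rw [hsame, habs]; exact hsq
    have h2 : r + r ≤ d * (|x i| + |x' i|) := by nlinarith
    nlinarith [mul_le_mul_of_nonneg_left h2 hA]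
  have t1 := hzx i
  have t2 := hzx' i
  calc |(z i : ℝ) - (z' i : ℝ)|
      ≤ |(z i : ℝ) - x i| + |x i - (z' i : ℝ)| := abs_sub_le _ _ _
    _ ≤ |(z i : ℝ) - x i| + (|x i - x' i| + |x' i - (z' i : ℝ)|) := by
        linarith [abs_sub_le (x i) (x' i) ((z' i : ℝ))]
    _ ≤ (d : ℝ) ^ 2 + 1 := by
        rw [abs_sub_comm ((z i : ℝ)) (x i)]
        linarith

/-- The number of unit hypercubes centred at lattice points of
`ℤ^d ∩ [-N,N]^d` that intersect the sphere `∂B(0,r)` (for `0 < r ≤ √d N`) is at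
most `c_d N^{d-1}` for a dimensional constant `c_d`. -/
theorem stmt_5 (d : ℕ) (hd : 1 ≤ d) :
    ∃ c : ℝ, 0 < c ∧ ∀ N : ℕ, 1 ≤ N → ∀ r : ℝ, 0 < r → r ≤ Real.sqrt d * N →
      ((({z : Fin d → ℤ | (∀ i, |z i| ≤ (N : ℤ)) ∧
          ∃ x : Fin d → ℝ, Real.sqrt (∑ i, x i ^ 2) = r ∧
            ∀ i, |x i - (z i : ℝ)| ≤ 1/2}).ncard : ℝ))
        ≤ c * (N : ℝ) ^ (d - 1) := by
  classical
  refine ⟨(((2 * d ^ 2 + 3) * (2 * d) * 3 ^ (d - 1) : ℕ) : ℝ), ?_, ?_⟩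
  · have h1 : 0 < (2 * d ^ 2 + 3) * (2 * d) * 3 ^ (d - 1) :=
      Nat.mul_pos (Nat.mul_pos (by omega) (by omega)) (pow_pos (by norm_num) _)
    exact_mod_cast h1
  intro N hN r hr _
  set S : Set (Fin d → ℤ) := {z : Fin d → ℤ | (∀ i, |z i| ≤ (N : ℤ)) ∧
      ∃ x : Fin d → ℝ, Real.sqrt (∑ i, x i ^ 2) = r ∧
        ∀ i, |x i - (z i : ℝ)| ≤ 1/2} with hSdef
  have hsub : S ⊆ ↑(Fintype.piFinset fun _ : Fin d => Finset.Icc (-(N : ℤ)) (N : ℤ)) := by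
    intro z hz
    simp only [Finset.coe_sort_coe, Finset.mem_coe, Fintype.mem_piFinset, Finset.mem_Icc]
    intro i
    exact abs_le.mp (hz.1 i)
  have hfin : S.Finite := Set.Finite.subset (Finset.finite_toSet _) hsub
  rw [Set.ncard_eq_toFinset_card S hfin]
  set T := hfin.toFinset with hT
  have hmemT : ∀ z, z ∈ T ↔ z ∈ S := fun z => Set.Finite.mem_toFinset hfin
  have i0 : Fin d := ⟨0, hd⟩
  -- choose witnesses
  have key : ∀ z : Fin d → ℤ, ∃ (q : Fin d × Bool) (x : Fin d → ℝ),
      z ∈ T → (Real.sqrt (∑ j, x j ^ 2) = r ∧ (∀ j, |x j - (z j : ℝ)| ≤ 1/2) ∧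
        (∀ j, x j ^ 2 ≤ x q.1 ^ 2) ∧ (q.2 = true ↔ 0 ≤ x q.1)) := by
    intro z
    by_cases hz : z ∈ T
    · obtain ⟨-, x, hx1, hx2⟩ := (hmemT z).mp hz
      obtain ⟨i, -, hi⟩ := Finset.exists_max_image Finset.univ (fun j => x j ^ 2)
        ⟨i0, Finset.mem_univ _⟩
      exact ⟨(i, decide (0 ≤ x i)), x, fun _ =>
        ⟨hx1, hx2, fun j => hi j (Finset.mem_univ j), by simp⟩⟩
    · exact ⟨(i0, true), fun _ => 0, fun h => absurd h hz⟩
  choose p xw hkey using key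
  set f : (Fin d → ℤ) → (Fin d × Bool) × (Fin d → ℤ) :=
    fun z => (p z, Function.update z (p z).1 0) with hf
  -- fiber bound
  have hfiber : ∀ a ∈ T.image f, (T.filter (fun z => f z = a)).card ≤ 2 * d ^ 2 + 3 := by
    intro a ha
    obtain ⟨z₀, hz₀T, hz₀⟩ := Finset.mem_image.mp ha
    set i := (p z₀).1 with hi
    have hoffAll : ∀ z ∈ T.filter (fun z => f z = a),
        p z = p z₀ ∧ ∀ j, j ≠ i → z j = z₀ j := by
      intro z hz
      obtain ⟨hzT, hfz⟩ := Finset.mem_filter.mp hz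
      rw [← hz₀] at hfz
      have hp : p z = p z₀ := congrArg Prod.fst hfz
      have hu : Function.update z (p z).1 0 = Function.update z₀ (p z₀).1 0 :=
        congrArg Prod.snd hfz
      refine ⟨hp, fun j hj => ?_⟩
      have h2 := congrFun hu j
      rw [hp] at h2
      rw [Function.update_of_ne hj, Function.update_of_ne hj] at h2
      exact h2
    have hmap : ∀ z ∈ T.filter (fun z => f z = a),
        z i ∈ Finset.Icc (z₀ i - ((d : ℤ) ^ 2 + 1)) (z₀ i + ((d : ℤ) ^ 2 + 1)) := by
      intro z hz
      obtain ⟨hp, hoff⟩ := hoffAll z hz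
      obtain ⟨hzT, -⟩ := Finset.mem_filter.mp hz
      obtain ⟨hx1, hx2, hx3, hx4⟩ := hkey z hzT
      obtain ⟨hy1, hy2, hy3, hy4⟩ := hkey z₀ hz₀T
      rw [hp] at hx3 hx4
      have hsign : 0 ≤ xw z i ↔ 0 ≤ xw z₀ i := Iff.trans hx4.symm hy4
      have hb := aux_bound d hd r hr i (xw z) (xw z₀) z z₀ hx1 hy1 hx2 hy2 hx3 hy3 hsign hoff
      have hint : |z i - z₀ i| ≤ (d : ℤ) ^ 2 + 1 := by
        have : |((z i - z₀ i : ℤ) : ℝ)| ≤ (((d : ℤ) ^ 2 + 1 : ℤ) : ℝ) := by push_cast; exact hb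
        exact_mod_cast this
      rw [Finset.mem_Icc]
      rw [abs_le] at hint
      omega
    have hinj : Set.InjOn (fun z : Fin d → ℤ => z i)
        (↑(T.filter (fun z => f z = a)) : Set (Fin d → ℤ)) := by
      intro z hz z' hz' hzz
      obtain ⟨-, hoff⟩ := hoffAll z (by simpa using hz)
      obtain ⟨-, hoff'⟩ := hoffAll z' (by simpa using hz')
      funext j
      by_cases hj : j = i
      · rw [hj]; exact hzz
      · rw [hoff j hj, hoff' j hj]
    calc (T.filter (fun z => f z = a)).card
        ≤ (Finset.Icc (z₀ i - ((d : ℤ) ^ 2 + 1)) (z₀ i + ((d : ℤ) ^ 2 + 1))).card :=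
          Finset.card_le_card_of_injOn _ hmap hinj
      _ ≤ 2 * d ^ 2 + 3 := by
          rw [Int.card_Icc]
          have : ((d : ℤ) ^ 2) = ((d ^ 2 : ℕ) : ℤ) := by push_cast; ring
          rw [this]
          omega
  -- image bound
  set t : Fin d → Fin d → Finset ℤ :=
    fun i j => if j = i then ({0} : Finset ℤ) else Finset.Icc (-(N : ℤ)) (N : ℤ) with ht
  have himage : (T.image f).card ≤ 2 * d * (2 * N + 1) ^ (d - 1) := by
    have hsub2 : T.image f ⊆ Finset.univ.biUnion (fun i : Fin d =>
        (({i} : Finset (Fin d)) ×ˢ (Finset.univ : Finset Bool)) ×ˢ Fintype.piFinset (t i)) := by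
      intro a ha
      obtain ⟨z, hzT, rfl⟩ := Finset.mem_image.mp ha
      refine Finset.mem_biUnion.mpr ⟨(p z).1, Finset.mem_univ _, ?_⟩
      rw [Finset.mem_product]
      constructor
      · rw [Finset.mem_product]
        exact ⟨Finset.mem_singleton_self _, Finset.mem_univ _⟩
      · rw [Fintype.mem_piFinset]
        intro j
        by_cases hj : j = (p z).1
        · rw [hj]
          simp [ht, hf, Function.update_self]
        · have hzS := (hmemT z).mp hzT
          have := abs_le.mp (hzS.1 j)
          simp [ht, hf, hj, Function.update_of_ne hj, Finset.mem_Icc, this.1, this.2]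
    have hcard_single : ∀ i : Fin d,
        ((({i} : Finset (Fin d)) ×ˢ (Finset.univ : Finset Bool)) ×ˢ
          Fintype.piFinset (t i)).card = 2 * (2 * N + 1) ^ (d - 1) := by
      intro i
      rw [Finset.card_product, Finset.card_product, Finset.card_singleton,
        Finset.card_univ, Fintype.card_piFinset]
      have hIcc : (Finset.Icc (-(N : ℤ)) (N : ℤ)).card = 2 * N + 1 := by
        rw [Int.card_Icc]; omega
      have hprod : ∏ j, (t i j).card = (2 * N + 1) ^ (d - 1) := by
        have e1 : ∀ j, (t i j).card = if j = i then 1 else 2 * N + 1 := by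
          intro j
          by_cases hj : j = i <;> simp [ht, hj, hIcc]
        rw [Finset.prod_congr rfl (fun j _ => e1 j),
          ← Finset.mul_prod_erase Finset.univ _ (Finset.mem_univ i),
          Finset.prod_congr rfl (fun j hj => if_neg (Finset.ne_of_mem_erase hj)),
          Finset.prod_const, Finset.card_erase_of_mem (Finset.mem_univ i),
          Finset.card_univ, Fintype.card_fin]
        simp
      rw [hprod, Fintype.card_bool]
    calc (T.image f).card
        ≤ (Finset.univ.biUnion (fun i : Fin d =>
            (({i} : Finset (Fin d)) ×ˢ (Finset.univ : Finset Bool)) ×ˢ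
              Fintype.piFinset (t i))).card := Finset.card_le_card hsub2
      _ ≤ ∑ i : Fin d, ((({i} : Finset (Fin d)) ×ˢ (Finset.univ : Finset Bool)) ×ˢ
              Fintype.piFinset (t i)).card := Finset.card_biUnion_le
      _ = ∑ _i : Fin d, 2 * (2 * N + 1) ^ (d - 1) :=
          Finset.sum_congr rfl (fun i _ => hcard_single i)
      _ = d * (2 * (2 * N + 1) ^ (d - 1)) := by
          rw [Finset.sum_const, Finset.card_univ, Fintype.card_fin, smul_eq_mul]
      _ = 2 * d * (2 * N + 1) ^ (d - 1) := by ring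
  have hmain : T.card ≤ (2 * d ^ 2 + 3) * (2 * d) * 3 ^ (d - 1) * N ^ (d - 1) := by
    have h1 : T.card ≤ (2 * d ^ 2 + 3) * (T.image f).card :=
      Finset.card_le_mul_card_image T _ hfiber
    have h2 : (2 * N + 1) ^ (d - 1) ≤ (3 * N) ^ (d - 1) :=
      Nat.pow_le_pow_left (by omega) _
    calc T.card ≤ (2 * d ^ 2 + 3) * (T.image f).card := h1
      _ ≤ (2 * d ^ 2 + 3) * (2 * d * (2 * N + 1) ^ (d - 1)) :=
          Nat.mul_le_mul_left _ himage
      _ ≤ (2 * d ^ 2 + 3) * (2 * d * (3 * N) ^ (d - 1)) :=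
          Nat.mul_le_mul_left _ (Nat.mul_le_mul_left _ h2)
      _ = (2 * d ^ 2 + 3) * (2 * d) * 3 ^ (d - 1) * N ^ (d - 1) := by
          rw [mul_pow]; ring
  exact_mod_cast hmain
end

section
/- Let d ≥ 1, N ≥ 1 and r > 0 with r ≤ √d·N. Let W be the number of lattice points of ℤ^d ∩ [-N,N]^d contained in the open ball B(0,r). Then |W - Vol(B(0,r) ∩ [-N,N]^d)| ≤ c_d·N^{d-1} for a constant c_d > 0 depending only on d. -/
open MeasureTheory Filter Topology Finset Pointwise ENNReal

namespace Stmt6Aux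

variable {d : ℕ}

/-- The region: box of half-side `M` intersected with the open ball of radius `R`. -/
def A (d : ℕ) (R M : ℝ) : Set (Fin d → ℝ) :=
  {x | (∀ i, |x i| ≤ M) ∧ Real.sqrt (∑ i, x i ^ 2) < R}

lemma A_mono {R R' M M' : ℝ} (hR : R ≤ R') (hM : M ≤ M') : A d R M ⊆ A d R' M' :=
  fun _x hx => ⟨fun i => (hx.1 i).trans hM, hx.2.trans_le hR⟩

lemma A_subset_box {R M : ℝ} : A d R M ⊆ {x : Fin d → ℝ | ∀ i, |x i| ≤ M} := fun _ hx => hx.1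

lemma abs_le_sqrt_sum (x : Fin d → ℝ) (i : Fin d) :
    |x i| ≤ Real.sqrt (∑ j, x j ^ 2) := by
  rw [← Real.sqrt_sq_eq_abs]
  exact Real.sqrt_le_sqrt (Finset.single_le_sum (fun j _ => sq_nonneg (x j)) (mem_univ i))

lemma A_subset_box' {R M : ℝ} : A d R M ⊆ {x : Fin d → ℝ | ∀ i, |x i| ≤ R} :=
  fun x hx i => ((abs_le_sqrt_sum x i).trans_lt hx.2).le

lemma box_eq (M : ℝ) :
    {x : Fin d → ℝ | ∀ i, |x i| ≤ M} = Set.univ.pi (fun _ => Set.Icc (-M) M) := by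
  ext x; simp [abs_le, Set.mem_pi, Pi.le_def, forall_and]

lemma vol_box (M : ℝ) (hM : 0 ≤ M) :
    volume {x : Fin d → ℝ | ∀ i, |x i| ≤ M} = ENNReal.ofReal ((2*M)^d) := by
  rw [box_eq, volume_pi_pi]
  have h : M - (-M) = 2*M := by ring
  simp [Real.volume_Icc, h, ← ENNReal.ofReal_pow (by positivity : (0:ℝ) ≤ 2*M)]
  rw [ENNReal.ofReal_pow (by positivity), ENNReal.ofReal_mul (by norm_num), ENNReal.ofReal_ofNat]

lemma volA_le_box {R M : ℝ} (hM : 0 ≤ M) :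
    volume (A d R M) ≤ ENNReal.ofReal ((2*M)^d) :=
  (measure_mono A_subset_box).trans_eq (vol_box M hM)

lemma volA_ne_top {R M : ℝ} (hM : 0 ≤ M) : volume (A d R M) ≠ ⊤ :=
  ne_top_of_le_ne_top ENNReal.ofReal_ne_top (volA_le_box hM)

lemma volA_toReal_le_box {R M : ℝ} (hM : 0 ≤ M) :
    (volume (A d R M)).toReal ≤ (2*M)^d :=
  ENNReal.toReal_le_of_le_ofReal (by positivity) (volA_le_box hM)

lemma volA_toReal_le_R {R M : ℝ} (hR : 0 ≤ R) :
    (volume (A d R M)).toReal ≤ (2*R)^d :=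
  ENNReal.toReal_le_of_le_ofReal (by positivity)
    ((measure_mono A_subset_box').trans_eq (vol_box R hR))

lemma A_smul (R M l : ℝ) (hl : 0 < l) :
    volume (A d (l*R) (l*M)) = ENNReal.ofReal (l^d) * volume (A d R M) := by
  have hset : A d (l*R) (l*M) = l • A d R M := by
    ext x
    rw [Set.mem_smul_set_iff_inv_smul_mem₀ hl.ne']
    simp only [A, Set.mem_setOf_eq, Pi.smul_apply, smul_eq_mul]
    have hsqrt : Real.sqrt (∑ i, (l⁻¹ * x i) ^ 2) = l⁻¹ * Real.sqrt (∑ i, x i ^ 2) := by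
      have h : ∑ i, (l⁻¹ * x i) ^ 2 = (l⁻¹)^2 * ∑ i, x i ^ 2 := by
        rw [Finset.mul_sum]; congr 1; ext i; ring
      rw [h, Real.sqrt_mul (sq_nonneg _), Real.sqrt_sq (by positivity)]
    constructor
    · rintro ⟨h1, h2⟩
      refine ⟨fun i => ?_, ?_⟩
      · rw [abs_mul, abs_inv, abs_of_pos hl, inv_mul_le_iff₀ hl]; exact h1 i
      · rw [hsqrt, inv_mul_lt_iff₀ hl]; exact h2
    · rintro ⟨h1, h2⟩
      refine ⟨fun i => ?_, ?_⟩
      · have h := h1 i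
        rw [abs_mul, abs_inv, abs_of_pos hl, inv_mul_le_iff₀ hl] at h; exact h
      · rw [hsqrt, inv_mul_lt_iff₀ hl] at h2; exact h2
  rw [hset, Measure.addHaar_smul_of_nonneg volume hl.le]
  congr 2
  simp [Module.finrank_pi]

lemma pow_sub_one_le_aux {a : ℝ} (h1 : 1 ≤ a) (h3 : a ≤ 3) (n : ℕ) :
    a ^ n - 1 ≤ (n : ℝ) * 3 ^ (n - 1) * (a - 1) := by
  rw [← geom_sum_mul a n]
  have hsum : ∑ i ∈ range n, a ^ i ≤ (n : ℝ) * 3 ^ (n - 1) := by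
    calc ∑ i ∈ range n, a ^ i ≤ ∑ i ∈ range n, (3:ℝ) ^ (n-1) := by
          refine Finset.sum_le_sum fun i hi => ?_
          calc a ^ i ≤ 3 ^ i := pow_le_pow_left₀ (by linarith) h3 i
            _ ≤ (3:ℝ) ^ (n-1) := pow_le_pow_right₀ (by norm_num) (by
                have := Finset.mem_range.mp hi; omega)
      _ = (n : ℝ) * 3 ^ (n - 1) := by simp [Finset.sum_const, nsmul_eq_mul]
  exact mul_le_mul_of_nonneg_right hsum (by linarith)

/-- The cube of side 1 centered at the lattice point `z`. -/
def Cube (d : ℕ) (z : Fin d → ℤ) : Set (Fin d → ℝ) :=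
  Set.univ.pi fun i => Set.Ico ((z i : ℝ) - 1/2) ((z i : ℝ) + 1/2)

lemma measurableSet_Cube (z : Fin d → ℤ) : MeasurableSet (Cube d z) :=
  MeasurableSet.univ_pi fun _ => measurableSet_Ico

lemma vol_Cube (z : Fin d → ℤ) : volume (Cube d z) = 1 := by
  rw [Cube, volume_pi_pi]
  simp only [Real.volume_Ico]
  norm_num

lemma Cube_disjoint {z w : Fin d → ℤ} (h : z ≠ w) : Disjoint (Cube d z) (Cube d w) := by
  rw [Set.disjoint_left]
  intro x hx hx'
  apply h
  funext i
  have h1 := hx i (Set.mem_univ i)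
  have h2 := hx' i (Set.mem_univ i)
  simp only [Set.mem_Ico] at h1 h2
  have h0 : |(z i : ℝ) - (w i : ℝ)| < 1 := by
    rw [abs_sub_lt_iff]; constructor <;> linarith
  have h3 : |((z i - w i : ℤ) : ℝ)| < 1 := by push_cast; exact h0
  have h4 : |z i - w i| < 1 := by exact_mod_cast h3
  rw [abs_lt] at h4
  omega

lemma sqrt_sum_sq_add_le (a b : Fin d → ℝ) :
    Real.sqrt (∑ i, (a i + b i) ^ 2) ≤
      Real.sqrt (∑ i, a i ^ 2) + Real.sqrt (∑ i, b i ^ 2) := by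
  have h := norm_add_le ((WithLp.equiv 2 (Fin d → ℝ)).symm a)
    ((WithLp.equiv 2 (Fin d → ℝ)).symm b)
  simpa [EuclideanSpace.norm_eq, sq_abs] using h

lemma sqrt_sum_half (d : ℕ) :
    Real.sqrt (∑ _i : Fin d, ((1:ℝ)/2)^2) = Real.sqrt d / 2 := by
  rw [Finset.sum_const, card_univ, Fintype.card_fin, nsmul_eq_mul]
  rw [Real.sqrt_mul (by positivity), Real.sqrt_sq (by norm_num)]
  ring

/-- The lattice point set. -/
def T (d : ℕ) (N : ℕ) (r : ℝ) : Set (Fin d → ℤ) :=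
  {z | (∀ i, |z i| ≤ (N : ℤ)) ∧ Real.sqrt (∑ i, (z i : ℝ) ^ 2) < r}

lemma T_finite (N : ℕ) (r : ℝ) : (T d N r).Finite := by
  apply Set.Finite.subset (Set.Finite.pi (fun _i : Fin d => Set.finite_Icc (-(N:ℤ)) N))
  intro z hz
  simp only [Set.mem_pi, Set.mem_univ, Set.mem_Icc, true_implies]
  exact fun i => abs_le.mp (hz.1 i)

lemma dist_cube {z : Fin d → ℤ} {x : Fin d → ℝ} (hx : x ∈ Cube d z) (i : Fin d) :
    |x i - (z i : ℝ)| ≤ 1/2 := by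
  have h := hx i (Set.mem_univ i)
  simp only [Set.mem_Ico] at h
  rw [abs_le]; constructor <;> linarith [h.1, h.2]

lemma sqrt_diff_le {a b : Fin d → ℝ} (h : ∀ i, |a i - b i| ≤ 1/2) :
    Real.sqrt (∑ i, (a i - b i) ^ 2) ≤ Real.sqrt d / 2 := by
  rw [← sqrt_sum_half d]
  apply Real.sqrt_le_sqrt
  apply Finset.sum_le_sum
  intro i _
  calc (a i - b i)^2 = |a i - b i|^2 := (sq_abs _).symm
    _ ≤ (1/2)^2 := by apply pow_le_pow_left₀ (abs_nonneg _) (h i)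

lemma count_le (N : ℕ) (r : ℝ) :
    ((T_finite (d := d) N r).toFinset.card : ℝ≥0∞) ≤
      volume (A d (r + Real.sqrt d / 2) ((N:ℝ) + 1/2)) := by
  classical
  set F := (T_finite (d := d) N r).toFinset with hF
  have hdisj : (F : Set (Fin d → ℤ)).PairwiseDisjoint (Cube d) :=
    fun z _ w _ hzw => Cube_disjoint hzw
  calc (F.card : ℝ≥0∞) = ∑ z ∈ F, volume (Cube d z) := by simp [vol_Cube]
    _ = volume (⋃ z ∈ F, Cube d z) :=
        (measure_biUnion_finset hdisj fun z _ => measurableSet_Cube z).symm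
    _ ≤ volume (A d (r + Real.sqrt d / 2) ((N:ℝ) + 1/2)) := by
        apply measure_mono
        intro x hx
        simp only [Set.mem_iUnion] at hx
        obtain ⟨z, hzF, hxz⟩ := hx
        have hzT : z ∈ T d N r := by
          rw [hF] at hzF; exact (Set.Finite.mem_toFinset _).mp hzF
        constructor
        · intro i
          have h1 := dist_cube hxz i
          have h2 : |(z i : ℝ)| ≤ (N : ℝ) := by exact_mod_cast hzT.1 i
          calc |x i| = |(z i : ℝ) + (x i - z i)| := by ring_nf
            _ ≤ |(z i : ℝ)| + |x i - z i| := abs_add_le _ _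
            _ ≤ (N:ℝ) + 1/2 := add_le_add h2 h1
        · have h1 : Real.sqrt (∑ i, (x i) ^ 2) ≤
              Real.sqrt (∑ i, (z i : ℝ) ^ 2) + Real.sqrt (∑ i, (x i - z i) ^ 2) := by
            have h := sqrt_sum_sq_add_le (fun i => (z i : ℝ)) (fun i => x i - z i)
            simpa using h
          have h2 := sqrt_diff_le (a := x) (b := fun i => (z i : ℝ)) (dist_cube hxz)
          calc Real.sqrt (∑ i, x i ^ 2)
              ≤ Real.sqrt (∑ i, (z i : ℝ) ^ 2) + Real.sqrt (∑ i, (x i - z i) ^ 2) := h1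
            _ < r + Real.sqrt d / 2 := add_lt_add_of_lt_of_le hzT.2 h2

lemma le_count (N : ℕ) (r : ℝ) :
    volume (A d (r - Real.sqrt d / 2) ((N:ℝ) - 1/2)) ≤
      ((T_finite (d := d) N r).toFinset.card : ℝ≥0∞) := by
  classical
  set F := (T_finite (d := d) N r).toFinset with hF
  have hsub : A d (r - Real.sqrt d / 2) ((N:ℝ) - 1/2) ⊆ ⋃ z ∈ F, Cube d z := by
    intro x hx
    set z : Fin d → ℤ := fun i => ⌊x i + 1/2⌋ with hz
    have hxz : x ∈ Cube d z := by
      intro i _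
      simp only [Set.mem_Ico, hz]
      have h1 : (⌊x i + 1/2⌋ : ℝ) ≤ x i + 1/2 := Int.floor_le _
      have h2 : x i + 1/2 < ⌊x i + 1/2⌋ + 1 := Int.lt_floor_add_one _
      constructor <;> [linarith; linarith]
    have hdist : ∀ i, |x i - (z i : ℝ)| ≤ 1/2 := dist_cube hxz
    have hzT : z ∈ T d N r := by
      constructor
      · intro i
        have h2 : |(z i : ℝ)| ≤ (N : ℝ) := by
          have h := hdist i
          have hxi := hx.1 i
          calc |(z i : ℝ)| = |x i + ((z i : ℝ) - x i)| := by ring_nf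
            _ ≤ |x i| + |(z i : ℝ) - x i| := abs_add_le _ _
            _ ≤ ((N:ℝ) - 1/2) + 1/2 := by
                rw [abs_sub_comm]
                exact add_le_add hxi h
            _ = (N : ℝ) := by ring
        exact_mod_cast h2
      · have h1 : Real.sqrt (∑ i, (z i : ℝ) ^ 2) ≤
            Real.sqrt (∑ i, x i ^ 2) + Real.sqrt (∑ i, ((z i : ℝ) - x i) ^ 2) := by
          have h := sqrt_sum_sq_add_le (fun i => x i) (fun i => (z i : ℝ) - x i)
          simpa using h
        have h2 := sqrt_diff_le (a := fun i => (z i : ℝ)) (b := x)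
          (fun i => by rw [abs_sub_comm]; exact hdist i)
        calc Real.sqrt (∑ i, (z i : ℝ) ^ 2)
            ≤ Real.sqrt (∑ i, x i ^ 2) + Real.sqrt (∑ i, ((z i : ℝ) - x i) ^ 2) := h1
          _ < (r - Real.sqrt d / 2) + Real.sqrt d / 2 := add_lt_add_of_lt_of_le hx.2 h2
          _ = r := by ring
    exact Set.mem_iUnion₂.mpr ⟨z, by rw [hF]; exact (Set.Finite.mem_toFinset _).mpr hzT, hxz⟩
  calc volume (A d (r - Real.sqrt d / 2) ((N:ℝ) - 1/2))
      ≤ volume (⋃ z ∈ F, Cube d z) := measure_mono hsub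
    _ ≤ ∑ z ∈ F, volume (Cube d z) := measure_biUnion_finset_le F (Cube d)
    _ = (F.card : ℝ≥0∞) := by simp [vol_Cube]

end Stmt6Aux

open Stmt6Aux

/-- The number `W` of lattice points of `ℤ^d ∩ [-N,N]^d` in the open
ball `B(0,r)` (with `0 < r ≤ √d N`) differs from `Vol(B(0,r) ∩ [-N,N]^d)` by at
most `c_d N^{d-1}` for a dimensional constant `c_d`. -/
theorem stmt_6 (d : ℕ) (hd : 1 ≤ d) :
    ∃ c : ℝ, 0 < c ∧ ∀ N : ℕ, 1 ≤ N → ∀ r : ℝ, 0 < r → r ≤ Real.sqrt d * N →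
      |(({z : Fin d → ℤ | (∀ i, |z i| ≤ (N : ℤ)) ∧
            Real.sqrt (∑ i, (z i : ℝ) ^ 2) < r}).ncard : ℝ)
        - (volume {x : Fin d → ℝ | (∀ i, |x i| ≤ (N : ℝ)) ∧
            Real.sqrt (∑ i, x i ^ 2) < r}).toReal|
        ≤ c * (N : ℝ) ^ (d - 1) := by
  set s := Real.sqrt d with hs_def
  have hs1 : 1 ≤ s := by
    rw [hs_def, show (1:ℝ) = Real.sqrt 1 by simp]
    exact Real.sqrt_le_sqrt (by exact_mod_cast hd)
  have hs0 : 0 < s := by linarith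
  set δ : ℝ := s / 2 with hδ_def
  have hδ0 : 0 < δ := by positivity
  refine ⟨(3*s)^d + (d:ℝ) * 3^(d-1) * ((2:ℝ)^(d+1) * s^d + 2^(d+1)), by positivity, ?_⟩
  intro N hN r hr hrs
  have hN1 : (1:ℝ) ≤ (N:ℝ) := by exact_mod_cast hN
  have hd1 : d - 1 + 1 = d := by omega
  -- identify the statement's sets with `T` and `A`
  have hTset : {z : Fin d → ℤ | (∀ i, |z i| ≤ (N : ℤ)) ∧
      Real.sqrt (∑ i, (z i : ℝ) ^ 2) < r} = T d N r := rfl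
  have hAset : {x : Fin d → ℝ | (∀ i, |x i| ≤ (N : ℝ)) ∧
      Real.sqrt (∑ i, x i ^ 2) < r} = A d r (N:ℝ) := rfl
  rw [hTset, hAset]
  rw [Set.ncard_eq_toFinset_card (T d N r) (T_finite N r)]
  set F := (T_finite (d := d) N r).toFinset
  set Wr : ℝ := (F.card : ℝ)
  set V₀ : ℝ := (volume (A d r (N:ℝ))).toReal
  set Vp : ℝ := (volume (A d (r + δ) ((N:ℝ) + 1/2))).toReal with hVp_def
  set Vm : ℝ := (volume (A d (r - δ) ((N:ℝ) - 1/2))).toReal with hVm_def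
  have hfinp : volume (A d (r + δ) ((N:ℝ) + 1/2)) ≠ ⊤ := volA_ne_top (by linarith)
  have hfinm : volume (A d (r - δ) ((N:ℝ) - 1/2)) ≠ ⊤ := volA_ne_top (by linarith)
  have hW_le : Wr ≤ Vp := by
    have h := count_le (d := d) N r
    have h' := ENNReal.toReal_mono hfinp h
    rw [ENNReal.toReal_natCast] at h'
    exact h'
  have h_le_W : Vm ≤ Wr := by
    have h := le_count (d := d) N r
    have h' := ENNReal.toReal_mono (by exact ENNReal.natCast_ne_top _) h
    rw [ENNReal.toReal_natCast] at h'
    exact h'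
  have hV0_le : V₀ ≤ Vp :=
    ENNReal.toReal_mono hfinp (measure_mono (A_mono (by linarith) (by linarith)))
  have h_le_V0 : Vm ≤ V₀ := by
    have hfin0 : volume (A d r (N:ℝ)) ≠ ⊤ := volA_ne_top (by linarith)
    exact ENNReal.toReal_mono hfin0 (measure_mono (A_mono (by linarith) (by linarith)))
  have habs : |Wr - V₀| ≤ Vp - Vm := by
    rw [abs_sub_le_iff]; constructor <;> linarith
  refine habs.trans ?_
  have hVm0 : 0 ≤ Vm := ENNReal.toReal_nonneg
  have hNpow1 : (1:ℝ) ≤ (N:ℝ)^(d-1) := one_le_pow₀ hN1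
  have hNpow0 : (0:ℝ) ≤ (N:ℝ)^(d-1) := by positivity
  by_cases hcase : r ≤ s
  · -- small radius: total volume is bounded by a constant
    have h1 : Vp ≤ (2*(r+δ))^d := volA_toReal_le_R (by linarith)
    have h2 : (2*(r+δ))^d ≤ (3*s)^d := by
      apply pow_le_pow_left₀ (by linarith)
      rw [hδ_def]; linarith
    have h3 : (3*s)^d * 1 ≤ ((3*s)^d + (d:ℝ) * 3^(d-1) * ((2:ℝ)^(d+1) * s^d + 2^(d+1)))
        * (N:ℝ)^(d-1) := by
      apply mul_le_mul (le_add_of_nonneg_right (by positivity)) hNpow1 (by norm_num) (by positivity)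
    calc Vp - Vm ≤ (3*s)^d * 1 := by rw [mul_one]; linarith
      _ ≤ _ := h3
  · -- large radius: use the dilation argument
    push_neg at hcase
    have hrδ : δ < r := by rw [hδ_def]; linarith
    have hrm : 0 < r - δ := by linarith
    have hrm2 : r / 2 ≤ r - δ := by rw [hδ_def]; linarith
    have hNm : (0:ℝ) < (N:ℝ) - 1/2 := by linarith
    have hNm2 : (N:ℝ)/2 ≤ (N:ℝ) - 1/2 := by linarith
    set l : ℝ := max ((r+δ)/(r-δ)) (((N:ℝ)+1/2)/((N:ℝ)-1/2)) with hl_def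
    have hl1 : 1 ≤ l := by
      refine le_trans ?_ (le_max_left _ _)
      rw [le_div_iff₀ hrm]; linarith
    have hl0 : 0 < l := by linarith
    have hl3 : l ≤ 3 := by
      apply max_le
      · rw [div_le_iff₀ hrm]; rw [hδ_def]; linarith
      · rw [div_le_iff₀ hNm]; linarith
    have hmul1 : r + δ ≤ l * (r - δ) := by
      rw [← div_le_iff₀ hrm]; exact le_max_left _ _
    have hmul2 : (N:ℝ) + 1/2 ≤ l * ((N:ℝ) - 1/2) := by
      rw [← div_le_iff₀ hNm]; exact le_max_right _ _
    have hVp_le : Vp ≤ l^d * Vm := by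
      have hsub : A d (r + δ) ((N:ℝ) + 1/2) ⊆ A d (l*(r-δ)) (l*((N:ℝ)-1/2)) :=
        A_mono hmul1 hmul2
      have hvol : volume (A d (l*(r-δ)) (l*((N:ℝ)-1/2)))
          = ENNReal.ofReal (l^d) * volume (A d (r-δ) ((N:ℝ)-1/2)) := A_smul _ _ l hl0
      have hmono := measure_mono (μ := (volume : Measure (Fin d → ℝ))) hsub
      rw [hvol] at hmono
      have hne : ENNReal.ofReal (l^d) * volume (A d (r-δ) ((N:ℝ)-1/2)) ≠ ⊤ :=
        ENNReal.mul_ne_top ENNReal.ofReal_ne_top hfinm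
      have h' := ENNReal.toReal_mono hne hmono
      rw [ENNReal.toReal_mul, ENNReal.toReal_ofReal (by positivity)] at h'
      exact h'
    have hl_sub : l - 1 ≤ 2*s/r + 2/(N:ℝ) := by
      have hb1 : (r+δ)/(r-δ) ≤ 1 + 2*s/r := by
        rw [div_le_iff₀ hrm]
        have hrne : r ≠ 0 := hr.ne'
        rw [hδ_def]
        have key : (1 + 2*s/r) * (r - s/2) = r + s/2 + (s * (r - s)) / r := by
          field_simp; ring
        rw [key]
        have : 0 ≤ (s * (r - s)) / r := by
          apply div_nonneg _ hr.le
          apply mul_nonneg hs0.le (by linarith)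
        linarith
      have hb2 : ((N:ℝ)+1/2)/((N:ℝ)-1/2) ≤ 1 + 2/(N:ℝ) := by
        rw [div_le_iff₀ hNm]
        have hNne : (N:ℝ) ≠ 0 := by positivity
        have key : (1 + 2/(N:ℝ)) * ((N:ℝ) - 1/2) = (N:ℝ) + 1/2 + ((N:ℝ) - 1) / (N:ℝ) := by
          field_simp; ring
        rw [key]
        have : 0 ≤ ((N:ℝ) - 1) / (N:ℝ) := by
          apply div_nonneg (by linarith) (by positivity)
        linarith
      have : l ≤ 1 + 2*s/r + 2/(N:ℝ) := by
        apply max_le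
        · refine hb1.trans ?_
          have : 0 ≤ 2/(N:ℝ) := by positivity
          linarith
        · refine hb2.trans ?_
          have : 0 ≤ 2*s/r := by positivity
          linarith
      linarith
    have hVm_r : Vm ≤ (2*r)^d := by
      refine (volA_toReal_le_R (R := r - δ) (by linarith)).trans ?_
      apply pow_le_pow_left₀ (by linarith); linarith
    have hVm_N : Vm ≤ (2*(N:ℝ))^d := by
      refine (volA_toReal_le_box (by linarith)).trans ?_
      apply pow_le_pow_left₀ (by linarith); linarith
    -- key numeric bounds
    have hkey1 : (2*s/r) * (2*r)^d ≤ 2^(d+1) * s^d * (N:ℝ)^(d-1) := by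
      have hrne : r ≠ 0 := hr.ne'
      have e1 : (2*r)^d = 2^d * (r^(d-1) * r) := by
        rw [mul_pow]; congr 1
        conv_lhs => rw [← hd1, pow_succ]
      have e2 : (2*s/r) * (2^d * (r^(d-1) * r)) = 2^(d+1) * s * r^(d-1) := by
        field_simp; ring
      rw [e1, e2]
      have e3 : r^(d-1) ≤ s^(d-1) * (N:ℝ)^(d-1) := by
        rw [← mul_pow]
        exact pow_le_pow_left₀ hr.le hrs _
      calc 2^(d+1) * s * r^(d-1) ≤ 2^(d+1) * s * (s^(d-1) * (N:ℝ)^(d-1)) := by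
            apply mul_le_mul_of_nonneg_left e3 (by positivity)
        _ = 2^(d+1) * s^d * (N:ℝ)^(d-1) := by
            have es : s ^ (d-1) * s = s ^ d := by
              conv_rhs => rw [← hd1, pow_succ]
            rw [← es]; ring
    have hkey2 : (2/(N:ℝ)) * (2*(N:ℝ))^d ≤ 2^(d+1) * (N:ℝ)^(d-1) := by
      have hNne : (N:ℝ) ≠ 0 := by positivity
      have e1 : (2*(N:ℝ))^d = 2^d * ((N:ℝ)^(d-1) * (N:ℝ)) := by
        rw [mul_pow]; congr 1
        conv_lhs => rw [← hd1, pow_succ]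
      rw [e1]
      have e2 : (2/(N:ℝ)) * (2^d * ((N:ℝ)^(d-1) * (N:ℝ))) = 2^(d+1) * (N:ℝ)^(d-1) := by
        field_simp; ring
      rw [e2]
    have hchain : Vp - Vm ≤ (d:ℝ) * 3^(d-1) * ((l - 1) * Vm) := by
      have h1 : Vp - Vm ≤ (l^d - 1) * Vm := by
        have : l^d * Vm - Vm = (l^d - 1) * Vm := by ring
        linarith [hVp_le]
      refine h1.trans ?_
      have h2 : l^d - 1 ≤ (d:ℝ) * 3^(d-1) * (l - 1) := pow_sub_one_le_aux hl1 hl3 d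
      calc (l^d - 1) * Vm ≤ ((d:ℝ) * 3^(d-1) * (l - 1)) * Vm :=
            mul_le_mul_of_nonneg_right h2 hVm0
        _ = (d:ℝ) * 3^(d-1) * ((l - 1) * Vm) := by ring
    have hlVm : (l - 1) * Vm ≤ 2^(d+1) * s^d * (N:ℝ)^(d-1) + 2^(d+1) * (N:ℝ)^(d-1) := by
      have hsr0 : (0:ℝ) ≤ 2*s/r := by positivity
      have hN0' : (0:ℝ) ≤ 2/(N:ℝ) := by positivity
      calc (l - 1) * Vm ≤ (2*s/r + 2/(N:ℝ)) * Vm :=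
            mul_le_mul_of_nonneg_right hl_sub hVm0
        _ = (2*s/r) * Vm + (2/(N:ℝ)) * Vm := by ring
        _ ≤ (2*s/r) * (2*r)^d + (2/(N:ℝ)) * (2*(N:ℝ))^d := by
            apply add_le_add
            · exact mul_le_mul_of_nonneg_left hVm_r hsr0
            · exact mul_le_mul_of_nonneg_left hVm_N hN0'
        _ ≤ 2^(d+1) * s^d * (N:ℝ)^(d-1) + 2^(d+1) * (N:ℝ)^(d-1) := add_le_add hkey1 hkey2
    have hfinal : Vp - Vm ≤ (d:ℝ) * 3^(d-1) * ((2:ℝ)^(d+1) * s^d + 2^(d+1)) * (N:ℝ)^(d-1) := by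
      refine hchain.trans ?_
      have := mul_le_mul_of_nonneg_left hlVm (by positivity : (0:ℝ) ≤ (d:ℝ) * 3^(d-1))
      calc (d:ℝ) * 3^(d-1) * ((l - 1) * Vm)
          ≤ (d:ℝ) * 3^(d-1) * (2^(d+1) * s^d * (N:ℝ)^(d-1) + 2^(d+1) * (N:ℝ)^(d-1)) := this
        _ = (d:ℝ) * 3^(d-1) * ((2:ℝ)^(d+1) * s^d + 2^(d+1)) * (N:ℝ)^(d-1) := by ring
    refine hfinal.trans ?_
    exact mul_le_mul_of_nonneg_right (le_add_of_nonneg_left (by positivity)) hNpow0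
end

section
/- Let (Wₖ⁽ⁿ⁾ : k ∈ [n]) be a triangular array of i.i.d. nonnegative random variables with 0 ≤ W⁽ⁿ⁾ ≤ n, Lᵖ-bounded for all 1 ≤ p < α with α > 1, and E[W⁽ⁿ⁾] = μₙ → μ. Then there exists a sequence ζₙ ↓ 0 such that Sₙ := W₁⁽ⁿ⁾ + ⋯ + Wₙ⁽ⁿ⁾ satisfies P(|Sₙ - n·μ| > ζₙ·n) ≤ ζₙ for all n. -/
open MeasureTheory Filter Topology ProbabilityTheory

/-- law of large numbers for the triangular array: there is `ζₙ ↓ 0`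
with `P(|Sₙ - nμ| > ζₙ n) ≤ ζₙ`. -/
theorem stmt_7 {Ω : Type*} [MeasureSpace Ω] [IsProbabilityMeasure (volume : Measure Ω)]
    (α : ℝ) (hα : 1 < α) (μ : ℝ) (hμ0 : 0 ≤ μ)
    (W : (n : ℕ) → Fin n → Ω → ℝ) (W0 : ℕ → Ω → ℝ)
    (hmeas : ∀ n i, Measurable (W n i)) (hmeas0 : ∀ n, Measurable (W0 n))
    (hrange : ∀ (n : ℕ) (i) (ω), W n i ω ∈ Set.Icc (0:ℝ) (n:ℝ))
    (hindep : ∀ n, iIndepFun (W n) volume)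
    (hdist : ∀ n i, Measure.map (W n i) volume = Measure.map (W0 n) volume)
    (hLp : ∀ p : ℝ, 1 ≤ p → p < α → ∃ C : ℝ, ∀ n, ∫ ω, (W0 n ω) ^ p ≤ C)
    (hmean : Tendsto (fun n => ∫ ω, W0 n ω) atTop (𝓝 μ)) :
    ∃ ζ : ℕ → ℝ, (∀ n, 0 < ζ n) ∧ Antitone ζ ∧ Tendsto ζ atTop (𝓝 0) ∧
      ∀ n : ℕ, (volume {ω | |(∑ i, W n i ω) - n * μ| > ζ n * n}).toReal ≤ ζ n := by
  classical
  -- choose the exponent p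
  set p : ℝ := min 2 ((1 + α) / 2) with hp_def
  have hp1 : 1 < p := lt_min one_lt_two (by linarith)
  have hp0 : 0 ≤ p := by linarith
  have hpα : p < α := by
    rcases le_total 2 ((1 + α) / 2) with h | h
    · rw [hp_def, min_eq_left h]; linarith
    · rw [hp_def, min_eq_right h]; linarith
  have hp2 : p ≤ 2 := min_le_left _ _
  obtain ⟨C, hC0⟩ := hLp p hp1.le hpα
  set C' : ℝ := max C 0 with hC'_def
  have hC'0 : 0 ≤ C' := le_max_right _ _
  have hC' : ∀ n, ∫ ω, (W0 n ω) ^ p ≤ C' := fun n => (hC0 n).trans (le_max_left _ _)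
  set μn : ℕ → ℝ := fun n => ∫ ω, W0 n ω with hμn_def
  -- transfer of integrals between W n i and W0 n
  have htrans : ∀ n (i : Fin n) (f : ℝ → ℝ), Measurable f →
      ∫ ω, f (W n i ω) = ∫ ω, f (W0 n ω) := by
    intro n i f hf
    rw [← integral_map (hmeas n i).aemeasurable hf.aestronglyMeasurable, hdist n i,
      integral_map (hmeas0 n).aemeasurable hf.aestronglyMeasurable]
  have hmem : ∀ n (i : Fin n), MemLp (W n i) 2 volume := by
    intro n i
    refine MemLp.of_bound (hmeas n i).aestronglyMeasurable (n : ℝ) (ae_of_all _ fun ω => ?_)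
    rw [Real.norm_eq_abs, abs_of_nonneg (hrange n i ω).1]
    exact (hrange n i ω).2
  -- a.e. range of W0 n for n ≥ 1
  have hae : ∀ n : ℕ, 0 < n → ∀ᵐ ω, W0 n ω ∈ Set.Icc (0:ℝ) (n:ℝ) := by
    intro n hn
    have i : Fin n := ⟨0, hn⟩
    have hpre : W n i ⁻¹' (Set.Icc (0:ℝ) (n:ℝ))ᶜ = ∅ := by
      ext ω; simpa using hrange n i ω
    have hmap : Measure.map (W0 n) volume (Set.Icc (0:ℝ) (n:ℝ))ᶜ = 0 := by
      rw [← hdist n i, Measure.map_apply (hmeas n i) measurableSet_Icc.compl, hpre,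
        measure_empty]
    rw [Measure.map_apply (hmeas0 n) measurableSet_Icc.compl] at hmap
    rw [ae_iff]
    exact hmap
  -- integrability of powers of W0 n
  have hint_p : ∀ n : ℕ, 0 < n → Integrable (fun ω => (W0 n ω) ^ p) := by
    intro n hn
    refine memLp_one_iff_integrable.1 (MemLp.of_bound ?_ ((n : ℝ) ^ p) ?_)
    · exact ((Real.continuous_rpow_const hp0).measurable.comp (hmeas0 n)).aestronglyMeasurable
    · filter_upwards [hae n hn] with ω hω
      rw [Real.norm_eq_abs, abs_of_nonneg (Real.rpow_nonneg hω.1 p)]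
      exact Real.rpow_le_rpow hω.1 hω.2 hp0
  have hint_sq : ∀ n : ℕ, 0 < n → Integrable (fun ω => (W0 n ω) ^ 2) := by
    intro n hn
    refine memLp_one_iff_integrable.1 (MemLp.of_bound ?_ ((n : ℝ) ^ 2) ?_)
    · exact ((hmeas0 n).pow_const 2).aestronglyMeasurable
    · filter_upwards [hae n hn] with ω hω
      rw [Real.norm_eq_abs, abs_of_nonneg (by positivity : (0:ℝ) ≤ (W0 n ω) ^ 2)]
      exact pow_le_pow_left₀ hω.1 hω.2 2
  -- the second moment bound
  have hsq : ∀ n : ℕ, 0 < n → ∫ ω, (W0 n ω) ^ 2 ≤ (n : ℝ) ^ ((2:ℝ) - p) * C' := by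
    intro n hn
    have hb : ∀ᵐ ω, (W0 n ω) ^ 2 ≤ (n : ℝ) ^ ((2:ℝ) - p) * (W0 n ω) ^ p := by
      filter_upwards [hae n hn] with ω hω
      rcases eq_or_lt_of_le hω.1 with h0 | h0
      · rw [← h0]
        simp [Real.zero_rpow (by positivity : p ≠ 0)]
      · have h2 : (W0 n ω) ^ p * (W0 n ω) ^ ((2:ℝ) - p) = (W0 n ω) ^ 2 := by
          rw [← Real.rpow_add h0, ← Real.rpow_natCast (W0 n ω) 2]
          norm_num
        rw [← h2, mul_comm ((W0 n ω) ^ p)]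
        exact mul_le_mul_of_nonneg_right
          (Real.rpow_le_rpow hω.1 hω.2 (by linarith)) (Real.rpow_nonneg hω.1 p)
    calc ∫ ω, (W0 n ω) ^ 2
        ≤ ∫ ω, (n : ℝ) ^ ((2:ℝ) - p) * (W0 n ω) ^ p :=
          integral_mono_ae (hint_sq n hn) ((hint_p n hn).const_mul _) hb
      _ = (n : ℝ) ^ ((2:ℝ) - p) * ∫ ω, (W0 n ω) ^ p := integral_const_mul _ _
      _ ≤ (n : ℝ) ^ ((2:ℝ) - p) * C' :=
          mul_le_mul_of_nonneg_left (hC' n) (Real.rpow_nonneg (Nat.cast_nonneg n) _)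
  -- the variance bound for the sum
  have hvar : ∀ n : ℕ, 0 < n →
      variance (fun ω => ∑ i, W n i ω) volume ≤ C' * (n : ℝ) ^ ((3:ℝ) - p) := by
    intro n hn
    have hnR : (0:ℝ) < n := by exact_mod_cast hn
    have hSeq : (fun ω => ∑ i, W n i ω) = ∑ i : Fin n, W n i := by
      ext ω; simp
    rw [hSeq, IndepFun.variance_sum (fun i _ => hmem n i)
      (fun i _ j _ hij => (hindep n).indepFun hij)]
    have hone : ∀ i : Fin n, variance (W n i) volume ≤ (n : ℝ) ^ ((2:ℝ) - p) * C' := by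
      intro i
      refine le_trans (variance_le_expectation_sq (hmeas n i).aestronglyMeasurable) ?_
      have heq : (∫ ω, (W n i ω) ^ 2) = ∫ ω, (W0 n ω) ^ 2 :=
        htrans n i (fun x => x ^ 2) (measurable_id.pow_const 2)
      have : volume[(W n i) ^ 2] = ∫ ω, (W0 n ω) ^ 2 := by
        simpa [Pi.pow_apply] using heq
      rw [this]
      exact hsq n hn
    calc ∑ i : Fin n, variance (W n i) volume
        ≤ ∑ _i : Fin n, (n : ℝ) ^ ((2:ℝ) - p) * C' := Finset.sum_le_sum fun i _ => hone i
      _ = (n : ℝ) * ((n : ℝ) ^ ((2:ℝ) - p) * C') := by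
          simp [Finset.sum_const, nsmul_eq_mul]
      _ = C' * (n : ℝ) ^ ((3:ℝ) - p) := by
          rw [show (3:ℝ) - p = 1 + (2 - p) by ring, Real.rpow_add hnR, Real.rpow_one]
          ring
  -- expectation of the sum
  have hES : ∀ n : ℕ, (∫ ω, (∑ i, W n i ω)) = (n : ℝ) * μn n := by
    intro n
    rw [integral_finset_sum Finset.univ (fun i _ => (hmem n i).integrable one_le_two)]
    have h1 : ∀ i : Fin n, (∫ ω, W n i ω) = μn n := fun i => by
      simpa using htrans n i id measurable_id
    rw [Finset.sum_congr rfl fun i _ => h1 i]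
    simp [Finset.sum_const, nsmul_eq_mul]
  -- the main quantitative estimate
  have hA : ∀ ε : ℝ, 0 < ε → ∃ N : ℕ, ∀ n ≥ N,
      (volume {ω | |(∑ i, W n i ω) - n * μ| > ε * n}).toReal ≤ ε := by
    intro ε hε
    obtain ⟨N1, hN1⟩ := Metric.tendsto_atTop.mp hmean (ε / 2) (by positivity)
    have hd2 : Tendsto (fun n : ℕ => 4 * C' / ε ^ 2 * (n : ℝ) ^ ((1:ℝ) - p)) atTop (𝓝 0) := by
      have h1 : Tendsto (fun x : ℝ => x ^ (-(p - 1))) atTop (𝓝 0) :=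
        tendsto_rpow_neg_atTop (by linarith)
      have h2 := (h1.comp tendsto_natCast_atTop_atTop).const_mul (4 * C' / ε ^ 2)
      simpa [Function.comp_def, show -(p - 1) = 1 - p by ring] using h2
    obtain ⟨N2, hN2⟩ := Metric.tendsto_atTop.mp hd2 ε hε
    refine ⟨max (max N1 N2) 1, fun n hn => ?_⟩
    have hn1 : 0 < n := lt_of_lt_of_le Nat.one_pos ((le_max_right _ 1).trans hn)
    have hnN1 : N1 ≤ n := ((le_max_left N1 N2).trans (le_max_left _ 1)).trans hn
    have hnN2 : N2 ≤ n := ((le_max_right N1 N2).trans (le_max_left _ 1)).trans hn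
    have hnR : (0:ℝ) < n := by exact_mod_cast hn1
    set b : ℝ := 4 * C' / ε ^ 2 * (n : ℝ) ^ ((1:ℝ) - p) with hb_def
    have hb0 : 0 ≤ b :=
      mul_nonneg (div_nonneg (by linarith) (sq_nonneg ε)) (Real.rpow_nonneg hnR.le _)
    have hbε : b ≤ ε := by
      have h := hN2 n hnN2
      rw [Real.dist_eq, sub_zero] at h
      exact (le_abs_self b).trans h.le
    have hmemS : MemLp (fun ω => ∑ i, W n i ω) 2 volume := by
      have h : (fun ω => ∑ i, W n i ω) = ∑ i : Fin n, W n i := by ext ω; simp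
      rw [h]; exact memLp_finset_sum' _ fun i _ => hmem n i
    have hcheb := meas_ge_le_variance_div_sq (μ := volume) hmemS
      (show (0:ℝ) < ε / 2 * n by positivity)
    have key : volume {ω | |(∑ i, W n i ω) - n * μ| > ε * n} ≤ ENNReal.ofReal b := by
      refine le_trans (measure_mono ?_) (le_trans hcheb (ENNReal.ofReal_le_ofReal ?_))
      · intro ω hω
        simp only [Set.mem_setOf_eq] at hω ⊢
        have hd : |μn n - μ| < ε / 2 := by
          have := hN1 n hnN1
          rwa [Real.dist_eq] at this
        have htri : |(∑ i, W n i ω) - n * μ|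
            ≤ |(∑ i, W n i ω) - n * μn n| + (n : ℝ) * |μn n - μ| := by
          have hre : (∑ i, W n i ω) - n * μ
              = ((∑ i, W n i ω) - n * μn n) + (n : ℝ) * (μn n - μ) := by ring
          rw [hre]
          refine (abs_add_le _ _).trans ?_
          rw [abs_mul, abs_of_nonneg hnR.le]
        have h5 : (n : ℝ) * |μn n - μ| ≤ (n : ℝ) * (ε / 2) :=
          mul_le_mul_of_nonneg_left hd.le hnR.le
        rw [hES n]
        linarith
      · rw [div_le_iff₀ (by positivity)]
        have hpow : (n : ℝ) ^ ((3:ℝ) - p) = (n : ℝ) ^ ((1:ℝ) - p) * (n : ℝ) ^ 2 := by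
          rw [← Real.rpow_natCast (n : ℝ) 2, ← Real.rpow_add hnR]
          congr 1
          push_cast
          ring
        calc variance (fun ω => ∑ i, W n i ω) volume
            ≤ C' * (n : ℝ) ^ ((3:ℝ) - p) := hvar n hn1
          _ = b * (ε / 2 * n) ^ 2 := by
              rw [hb_def, hpow]
              field_simp
              ring
    calc (volume {ω | |(∑ i, W n i ω) - n * μ| > ε * n}).toReal
        ≤ (ENNReal.ofReal b).toReal := ENNReal.toReal_mono ENNReal.ofReal_ne_top key
      _ = b := ENNReal.toReal_ofReal hb0
      _ ≤ ε := hbε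
  -- construct ζ
  choose N hN using fun k : ℕ => hA (1 / ((k : ℝ) + 1)) (by positivity)
  set N' : ℕ → ℕ := fun k => k + (Finset.range (k + 1)).sup N with hN'_def
  set K : ℕ → ℕ := fun n => Nat.findGreatest (fun k => N' k ≤ n) n with hK_def
  have hKmono : Monotone K := fun a b hab =>
    Nat.findGreatest_mono (fun k hk => hk.trans hab) hab
  refine ⟨fun n => 1 / ((K n : ℝ) + 1), fun n => by positivity, ?_, ?_, ?_⟩
  · intro a b hab
    exact one_div_le_one_div_of_le (by positivity)
      (by exact_mod_cast Nat.add_le_add_right (hKmono hab) 1)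
  · have hKtop : Tendsto K atTop atTop := by
      refine tendsto_atTop_atTop.2 fun b => ⟨N' b, fun n hn => ?_⟩
      exact Nat.le_findGreatest (le_trans (Nat.le_add_right b _) hn) hn
    exact tendsto_one_div_add_atTop_nhds_zero_nat.comp hKtop
  · intro n
    show (volume {ω | |(∑ i, W n i ω) - n * μ| > 1 / ((K n : ℝ) + 1) * n}).toReal
      ≤ 1 / ((K n : ℝ) + 1)
    by_cases hk0 : K n = 0
    · have h1 : volume {ω | |(∑ i, W n i ω) - n * μ| > 1 / ((K n : ℝ) + 1) * n} ≤ 1 :=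
        prob_le_one
      refine le_trans (ENNReal.toReal_mono ENNReal.one_ne_top h1) ?_
      rw [hk0]
      norm_num
    · have hfg : Nat.findGreatest (fun k => N' k ≤ n) n = K n := rfl
      have hks : N' (K n) ≤ n := Nat.findGreatest_of_ne_zero (P := fun k => N' k ≤ n) (m := K n) hfg hk0
      have hNk : N (K n) ≤ n :=
        le_trans (le_trans (Finset.le_sup (Finset.mem_range.2 (Nat.lt_succ_self _)))
          (Nat.le_add_left _ _)) hks
      exact hN (K n) n hNk
end

section
/- Let Ŵ⁽ⁿ⁾ := W⁽ⁿ⁾·1{W⁽ⁿ⁾ ≤ εn} with 0 ≤ W⁽ⁿ⁾ ≤ n Lᵖ-bounded for all 1 ≤ p < α (α > 1), E[W⁽ⁿ⁾] = μₙ → μ, and s := a·log n / n with 0 < a < (α-1)/ε. Then E[exp(s·Ŵ⁽ⁿ⁾)] ≤ exp(s·(μₙ + o(1))) as n → ∞. -/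
open MeasureTheory Filter Topology

/-- Pointwise exponential bound: for `X ≥ 0` and `q ≥ 0`,
`exp X ≤ 1 + X + X² + X^q * exp X`. -/
lemma aux_exp_bound (X q : ℝ) (hX : 0 ≤ X) (hq : 0 ≤ q) :
    Real.exp X ≤ 1 + X + X ^ 2 + X ^ q * Real.exp X := by
  have hXq : 0 ≤ X ^ q * Real.exp X :=
    mul_nonneg (Real.rpow_nonneg hX q) (Real.exp_pos X).le
  rcases le_or_gt X 1 with h | h
  · have habs : |X| ≤ 1 := by rw [abs_of_nonneg hX]; exact h
    have := (abs_le.mp (Real.abs_exp_sub_one_sub_id_le habs)).2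
    linarith
  · have h1 : (1 : ℝ) ≤ X ^ q := by
      have := Real.rpow_le_rpow (by norm_num) h.le hq
      simpa using this
    have h2 : Real.exp X ≤ X ^ q * Real.exp X :=
      le_mul_of_one_le_left (Real.exp_pos X).le h1
    nlinarith [sq_nonneg X]

/-- Second–moment bound for a truncated variable: if `0 ≤ w ≤ M` then
`w² ≤ 1 + (1+M)^(max (2-q) 0) * w^q` for `1 ≤ q`. -/
lemma aux_sq_bound (w M q : ℝ) (hw : 0 ≤ w) (hwM : w ≤ M) (hM : 0 ≤ M) (hq : 1 ≤ q) :
    w ^ 2 ≤ 1 + (1 + M) ^ (max (2 - q) 0) * w ^ q := by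
  have hwq : 0 ≤ w ^ q := Real.rpow_nonneg hw q
  rcases le_or_gt q 2 with h2 | h2
  · have ht : max (2 - q) 0 = 2 - q := max_eq_left (by linarith)
    rw [ht]
    have hsplit : w ^ (2 : ℝ) = w ^ q * w ^ (2 - q) := by
      rw [← Real.rpow_add' hw (by norm_num)]
      ring_nf
    have h1M : w ≤ 1 + M := by linarith
    have hle : w ^ (2 - q) ≤ (1 + M) ^ (2 - q) :=
      Real.rpow_le_rpow hw h1M (by linarith)
    have : w ^ (2 : ℝ) ≤ (1 + M) ^ (2 - q) * w ^ q := by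
      rw [hsplit, mul_comm ((1 + M) ^ (2 - q))]
      exact mul_le_mul_of_nonneg_left hle hwq
    calc w ^ 2 = w ^ (2 : ℝ) := by rw [← Real.rpow_natCast w 2]; norm_num
      _ ≤ (1 + M) ^ (2 - q) * w ^ q := this
      _ ≤ 1 + (1 + M) ^ (2 - q) * w ^ q := by linarith
  · have ht : max (2 - q) 0 = 0 := max_eq_right (by linarith)
    rw [ht, Real.rpow_zero, one_mul]
    rcases le_or_gt w 1 with hw1 | hw1
    · have : w ^ 2 ≤ 1 := pow_le_one₀ hw hw1
      linarith
    · have hpow : w ^ (2 : ℝ) ≤ w ^ q :=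
        Real.rpow_le_rpow_of_exponent_le hw1.le (by linarith)
      have h2' : w ^ 2 = w ^ (2 : ℝ) := by
        rw [show (2:ℝ) = ((2:ℕ):ℝ) by norm_num, Real.rpow_natCast]
      rw [h2']
      linarith

/-- `(log n)^c / n^d → 0` for `d > 0`. -/
lemma aux_log_div_tendsto (c d : ℝ) (hd : 0 < d) :
    Tendsto (fun n : ℕ => Real.log n ^ c / (n : ℝ) ^ d) atTop (𝓝 0) :=
  ((isLittleO_log_rpow_rpow_atTop c hd).tendsto_div_nhds_zero).comp
    tendsto_natCast_atTop_atTop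

/-- with `Ŵ⁽ⁿ⁾ = W⁽ⁿ⁾·1{W⁽ⁿ⁾ ≤ εn}` and `s = a log n / n`,
`0 < a < (α-1)/ε`, one has `E[exp(s Ŵ⁽ⁿ⁾)] ≤ exp(s(μₙ + o(1)))`. -/
theorem stmt_11 {Ω : Type*} [MeasureSpace Ω] [IsProbabilityMeasure (volume : Measure Ω)]
    (α : ℝ) (hα : 1 < α) (μ : ℝ)
    (W : ℕ → Ω → ℝ) (hmeas : ∀ n, Measurable (W n))
    (hrange : ∀ (n : ℕ) (ω), W n ω ∈ Set.Icc (0:ℝ) (n:ℝ))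
    (hLp : ∀ p : ℝ, 1 ≤ p → p < α → ∃ C : ℝ, ∀ n, ∫ ω, (W n ω) ^ p ≤ C)
    (hmean : Tendsto (fun n => ∫ ω, W n ω) atTop (𝓝 μ))
    (ε a : ℝ) (hε : 0 < ε) (ha : 0 < a) (haε : a < (α - 1) / ε) :
    ∃ e : ℕ → ℝ, Tendsto e atTop (𝓝 0) ∧
      ∀ n : ℕ, 1 ≤ n →
        (∫ ω, Real.exp ((a * Real.log n / n) *
            (if W n ω ≤ ε * n then W n ω else 0)))
          ≤ Real.exp ((a * Real.log n / n) * ((∫ ω, W n ω) + e n)) := by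
  have hae : a * ε < α - 1 := by
    rw [lt_div_iff₀ hε] at haε; linarith
  set q : ℝ := (a * ε + α + 1) / 2 with hq_def
  have hq1 : 1 + a * ε < q := by
    simp only [hq_def]; nlinarith [mul_pos ha hε]
  have hqα : q < α := by simp only [hq_def]; nlinarith
  have hq1' : (1 : ℝ) ≤ q := by nlinarith [mul_pos ha hε]
  have hq0 : (0 : ℝ) ≤ q := by linarith
  set t : ℝ := max (2 - q) 0 with ht_def
  have ht0 : 0 ≤ t := le_max_right _ _
  have ht1 : t < 1 := by
    rcases max_cases (2 - q) 0 with ⟨h, _⟩ | ⟨h, _⟩ <;> rw [ht_def, h] <;> nlinarith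
  obtain ⟨C, hC⟩ := hLp q hq1' hqα
  set C' : ℝ := max C 0 with hC'_def
  have hC'0 : 0 ≤ C' := le_max_right _ _
  have hCC' : C ≤ C' := le_max_left _ _
  set s : ℕ → ℝ := fun n => a * Real.log n / n with hs_def
  refine ⟨fun n => s n + s n * ((1 + ε * n) ^ t * C')
      + (s n) ^ (q - 1) * (n : ℝ) ^ (a * ε) * C', ?_, ?_⟩
  · -- limit of the error term
    have hT1 : Tendsto (fun n : ℕ => s n) atTop (𝓝 0) := by
      have := (aux_log_div_tendsto 1 1 one_pos).const_mul a
      rw [mul_zero] at this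
      refine this.congr fun n => ?_
      simp only [Real.rpow_one, hs_def]
      ring
    have hT2 : Tendsto (fun n : ℕ => s n * ((1 + ε * n) ^ t * C')) atTop (𝓝 0) := by
      have hg := (aux_log_div_tendsto 1 (1 - t) (by linarith)).const_mul
        (a * (1 + ε) ^ t * C')
      rw [mul_zero] at hg
      refine squeeze_zero' ?_ ?_ hg
      · filter_upwards [eventually_ge_atTop 1] with n hn
        have hn1 : (1 : ℝ) ≤ (n : ℝ) := by exact_mod_cast hn
        have hlog : 0 ≤ Real.log n := Real.log_nonneg hn1
        have hsn : 0 ≤ s n := by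
          apply div_nonneg (mul_nonneg ha.le hlog) (by linarith)
        exact mul_nonneg hsn (mul_nonneg (Real.rpow_nonneg (by nlinarith) t) hC'0)
      · filter_upwards [eventually_ge_atTop 1] with n hn
        have hn1 : (1 : ℝ) ≤ (n : ℝ) := by exact_mod_cast hn
        have hn0 : (0 : ℝ) < n := by linarith
        have hlog : 0 ≤ Real.log n := Real.log_nonneg hn1
        have hb : (1 + ε * n) ^ t ≤ (1 + ε) ^ t * (n : ℝ) ^ t := by
          rw [← Real.mul_rpow (by linarith) hn0.le]
          apply Real.rpow_le_rpow (by nlinarith) (by nlinarith) ht0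
        have hsn : 0 ≤ s n := div_nonneg (mul_nonneg ha.le hlog) hn0.le
        have key : s n * ((1 + ε * n) ^ t * C') ≤ s n * ((1 + ε) ^ t * (n:ℝ) ^ t * C') :=
          mul_le_mul_of_nonneg_left
            (mul_le_mul_of_nonneg_right hb hC'0) hsn
        refine key.trans (le_of_eq ?_)
        have hnt : (n : ℝ) ^ ((1:ℝ) - t) = (n : ℝ) / (n : ℝ) ^ t := by
          rw [Real.rpow_sub hn0, Real.rpow_one]
        have hntpos : (0 : ℝ) < (n : ℝ) ^ t := Real.rpow_pos_of_pos hn0 t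
        rw [Real.rpow_one, hnt, hs_def]
        field_simp
    have hT3 : Tendsto (fun n : ℕ => (s n) ^ (q - 1) * (n : ℝ) ^ (a * ε) * C')
        atTop (𝓝 0) := by
      have hg := (aux_log_div_tendsto (q - 1) (q - 1 - a * ε) (by linarith)).const_mul
        (a ^ (q - 1) * C')
      rw [mul_zero] at hg
      refine squeeze_zero' ?_ ?_ hg
      · filter_upwards with n
        exact mul_nonneg (mul_nonneg (Real.rpow_nonneg (by positivity) _)
          (Real.rpow_nonneg (Nat.cast_nonneg n) _)) hC'0
      · filter_upwards [eventually_ge_atTop 1] with n hn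
        have hn1 : (1 : ℝ) ≤ (n : ℝ) := by exact_mod_cast hn
        have hn0 : (0 : ℝ) < n := by linarith
        have hlog : 0 ≤ Real.log n := Real.log_nonneg hn1
        have h1 : (s n) ^ (q - 1) = a ^ (q-1) * Real.log n ^ (q-1) / (n:ℝ) ^ (q-1) := by
          rw [hs_def]
          rw [Real.div_rpow (mul_nonneg ha.le hlog) hn0.le,
            Real.mul_rpow ha.le hlog]
        have h2 : (n : ℝ) ^ (q - 1 - a * ε) = (n:ℝ) ^ (q-1) / (n:ℝ) ^ (a*ε) := by
          rw [Real.rpow_sub hn0]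
        have hq1pos : (0:ℝ) < (n:ℝ) ^ (q-1) := Real.rpow_pos_of_pos hn0 _
        have haepos : (0:ℝ) < (n:ℝ) ^ (a*ε) := Real.rpow_pos_of_pos hn0 _
        rw [h1, h2]
        rw [div_div_eq_mul_div]
        apply le_of_eq
        field_simp
    have := (hT1.add hT2).add hT3
    simpa using this
  · -- the main estimate
    intro n hn
    rcases eq_or_lt_of_le hn with h1 | h2
    · -- n = 1 : s = 0, both sides equal 1
      subst h1
      simp [hs_def]
    · -- n ≥ 2
      have hn2 : 2 ≤ n := h2
      have hn1R : (1 : ℝ) < (n : ℝ) := by exact_mod_cast h2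
      have hn0 : (0 : ℝ) < (n : ℝ) := by linarith
      have hlog : 0 < Real.log n := Real.log_pos hn1R
      have hspos : 0 < s n := div_pos (mul_pos ha hlog) hn0
      set sn := s n with hsn_def
      have hsn_eq : a * Real.log n / n = sn := rfl
      set Wh : Ω → ℝ := fun ω => if W n ω ≤ ε * n then W n ω else 0 with hWh_def
      have hεn0 : (0:ℝ) ≤ ε * n := by positivity
      have hWh_meas : Measurable Wh :=
        Measurable.ite (measurableSet_le (hmeas n) measurable_const)
          (hmeas n) measurable_const
      have hWh0 : ∀ ω, 0 ≤ Wh ω := by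
        intro ω; rw [hWh_def]; dsimp only
        split
        · exact (hrange n ω).1
        · exact le_rfl
      have hWhle : ∀ ω, Wh ω ≤ ε * n := by
        intro ω; rw [hWh_def]; dsimp only
        split
        · assumption
        · exact hεn0
      have hWhW : ∀ ω, Wh ω ≤ W n ω := by
        intro ω; rw [hWh_def]; dsimp only
        split
        · exact le_refl _
        · exact (hrange n ω).1
      -- integrability helper
      have key_int : ∀ (f : Ω → ℝ), Measurable f → ∀ B : ℝ, (∀ ω, |f ω| ≤ B) →
          Integrable f := by
        intro f hf B hB
        exact (integrable_const B).mono' hf.aestronglyMeasurable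
          (ae_of_all _ (by simpa using hB))
      have intWh : Integrable Wh :=
        key_int Wh hWh_meas (ε * n) fun ω => by
          rw [abs_of_nonneg (hWh0 ω)]; exact hWhle ω
      have intW : Integrable (W n) :=
        key_int (W n) (hmeas n) n fun ω => by
          rw [abs_of_nonneg (hrange n ω).1]; exact (hrange n ω).2
      have intWhq : Integrable (fun ω => Wh ω ^ q) :=
        key_int _ ((Real.continuous_rpow_const hq0).measurable.comp hWh_meas) ((ε * n) ^ q) fun ω => by
          rw [abs_of_nonneg (Real.rpow_nonneg (hWh0 ω) q)]
          exact Real.rpow_le_rpow (hWh0 ω) (hWhle ω) hq0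
      have intWq : Integrable (fun ω => W n ω ^ q) :=
        key_int _ ((Real.continuous_rpow_const hq0).measurable.comp (hmeas n)) ((n : ℝ) ^ q) fun ω => by
          rw [abs_of_nonneg (Real.rpow_nonneg (hrange n ω).1 q)]
          exact Real.rpow_le_rpow (hrange n ω).1 (hrange n ω).2 hq0
      set K : ℝ := sn ^ 2 * (1 + ε * n) ^ t + sn ^ q * (n : ℝ) ^ (a * ε) with hK_def
      have hK0 : 0 ≤ K := by
        apply add_nonneg
        · exact mul_nonneg (sq_nonneg sn) (Real.rpow_nonneg (by linarith) t)
        · exact mul_nonneg (Real.rpow_nonneg hspos.le q)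
            (Real.rpow_nonneg hn0.le _)
      -- pointwise bound
      have hpt : ∀ ω, Real.exp (sn * Wh ω) ≤
          (1 + sn ^ 2) + sn * Wh ω + K * Wh ω ^ q := by
        intro ω
        have hX : 0 ≤ sn * Wh ω := mul_nonneg hspos.le (hWh0 ω)
        have h1 := aux_exp_bound (sn * Wh ω) q hX hq0
        have hexple : Real.exp (sn * Wh ω) ≤ (n : ℝ) ^ (a * ε) := by
          have : sn * Wh ω ≤ a * ε * Real.log n := by
            have := mul_le_mul_of_nonneg_left (hWhle ω) hspos.le
            calc sn * Wh ω ≤ sn * (ε * n) := this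
              _ = a * ε * Real.log n := by
                rw [hsn_def, hs_def]; field_simp
          calc Real.exp (sn * Wh ω) ≤ Real.exp (a * ε * Real.log n) :=
                Real.exp_le_exp.mpr this
            _ = (n : ℝ) ^ (a * ε) := by
                rw [Real.rpow_def_of_pos hn0]; ring_nf
        have hmulq : (sn * Wh ω) ^ q = sn ^ q * Wh ω ^ q :=
          Real.mul_rpow hspos.le (hWh0 ω)
        have hsq : (sn * Wh ω) ^ 2 = sn ^ 2 * Wh ω ^ 2 := mul_pow sn (Wh ω) 2
        have hsb := aux_sq_bound (Wh ω) (ε * n) q (hWh0 ω) (hWhle ω) hεn0 hq1'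
        have hWq0 : 0 ≤ Wh ω ^ q := Real.rpow_nonneg (hWh0 ω) q
        have hsnq0 : 0 ≤ sn ^ q := Real.rpow_nonneg hspos.le q
        -- combine
        have step1 : (sn * Wh ω) ^ 2 ≤ sn ^ 2 * (1 + (1 + ε * n) ^ t * Wh ω ^ q) := by
          rw [hsq]
          exact mul_le_mul_of_nonneg_left hsb (sq_nonneg sn)
        have step2 : (sn * Wh ω) ^ q * Real.exp (sn * Wh ω) ≤
            sn ^ q * (n : ℝ) ^ (a * ε) * Wh ω ^ q := by
          rw [hmulq]
          calc sn ^ q * Wh ω ^ q * Real.exp (sn * Wh ω)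
              ≤ sn ^ q * Wh ω ^ q * (n : ℝ) ^ (a * ε) :=
                mul_le_mul_of_nonneg_left hexple (mul_nonneg hsnq0 hWq0)
            _ = sn ^ q * (n : ℝ) ^ (a * ε) * Wh ω ^ q := by ring
        have expand : (1 + sn ^ 2) + sn * Wh ω + K * Wh ω ^ q
            = 1 + sn * Wh ω + sn ^ 2 * (1 + (1 + ε * ↑n) ^ t * Wh ω ^ q)
              + sn ^ q * (n : ℝ) ^ (a * ε) * Wh ω ^ q := by
          rw [hK_def]; ring
        rw [expand]
        linarith [h1, step1, step2]
      -- integrate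
      have intLHS : Integrable (fun ω => Real.exp (sn * Wh ω)) := by
        refine key_int _ (Real.measurable_exp.comp (measurable_const.mul hWh_meas))
          (Real.exp (sn * (ε * n))) fun ω => ?_
        rw [abs_of_nonneg (Real.exp_pos _).le]
        exact Real.exp_le_exp.mpr (mul_le_mul_of_nonneg_left (hWhle ω) hspos.le)
      have intRHS : Integrable (fun ω => (1 + sn ^ 2) + sn * Wh ω + K * Wh ω ^ q) :=
        ((integrable_const _).add (intWh.const_mul sn)).add (intWhq.const_mul K)
      have hint1 : (∫ ω, Real.exp (sn * Wh ω)) ≤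
          ∫ ω, ((1 + sn ^ 2) + sn * Wh ω + K * Wh ω ^ q) :=
        integral_mono intLHS intRHS hpt
      have hint2 : (∫ ω, ((1 + sn ^ 2) + sn * Wh ω + K * Wh ω ^ q)) =
          (1 + sn ^ 2) + sn * (∫ ω, Wh ω) + K * (∫ ω, Wh ω ^ q) := by
        have e1 : (∫ ω, ((1 + sn ^ 2) + sn * Wh ω + K * Wh ω ^ q))
            = (∫ ω, ((1 + sn ^ 2) + sn * Wh ω)) + ∫ ω, K * Wh ω ^ q :=
          integral_add ((integrable_const _).add (intWh.const_mul sn))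
            (intWhq.const_mul K)
        have e2 : (∫ ω, ((1 + sn ^ 2) + sn * Wh ω))
            = (∫ _ω, (1 + sn ^ 2)) + ∫ ω, sn * Wh ω :=
          integral_add (integrable_const _) (intWh.const_mul sn)
        rw [e1, e2, integral_const, integral_const_mul, integral_const_mul]
        simp [measure_univ]
      have hWh_int_le : (∫ ω, Wh ω) ≤ ∫ ω, W n ω :=
        integral_mono intWh intW hWhW
      have hWhq_int_le : (∫ ω, Wh ω ^ q) ≤ C' := by
        refine le_trans (integral_mono intWhq intWq fun ω => ?_) ((hC n).trans hCC')
        exact Real.rpow_le_rpow (hWh0 ω) (hWhW ω) hq0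
      set μn : ℝ := ∫ ω, W n ω with hμn_def
      have main : (∫ ω, Real.exp (sn * Wh ω)) ≤ (1 + sn ^ 2) + sn * μn + K * C' := by
        refine hint1.trans ?_
        rw [hint2]
        have h3 : sn * (∫ ω, Wh ω) ≤ sn * μn :=
          mul_le_mul_of_nonneg_left hWh_int_le hspos.le
        have h4 : K * (∫ ω, Wh ω ^ q) ≤ K * C' :=
          mul_le_mul_of_nonneg_left hWhq_int_le hK0
        linarith
      -- conclude
      set en : ℝ := sn + sn * ((1 + ε * n) ^ t * C')
          + sn ^ (q - 1) * (n : ℝ) ^ (a * ε) * C' with hen_def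
      have hKC' : sn ^ 2 + K * C' = sn * en := by
        rw [hen_def, hK_def]
        have hsnq : sn ^ q = sn * sn ^ (q - 1) := by
          rw [show q = 1 + (q - 1) by ring, Real.rpow_add hspos, Real.rpow_one]
          ring_nf
        rw [hsnq]
        ring
      have final : (1 + sn ^ 2) + sn * μn + K * C' ≤ Real.exp (sn * (μn + en)) := by
        have := Real.add_one_le_exp (sn * (μn + en))
        have heq : sn * (μn + en) = sn * μn + (sn ^ 2 + K * C') := by
          rw [hKC']; ring
        linarith [heq ▸ this]
      calc (∫ ω, Real.exp (a * Real.log n / n *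
              (if W n ω ≤ ε * n then W n ω else 0)))
          = ∫ ω, Real.exp (sn * Wh ω) := by rfl
        _ ≤ (1 + sn ^ 2) + sn * μn + K * C' := main
        _ ≤ Real.exp (sn * (μn + en)) := final
end
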